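/- In the 4-player matched–mismatched pennies replicator system, the line segment {(1−t, t, t, 1−t) : t ∈ (0,1)} is invariant under the flow, and every solution starting on it converges to the mixed equilibrium (1/2, 1/2, 1/2, 1/2) as t → ∞. -/

import Mathlib

open Set Filter

private lemma pennies4_key (B c p q : ℝ) (hl : -B ≤ c) (hr : c ≤ B) :
    2*c*p*q ≤ B*(p^2+q^2) ∧ -(B*(p^2+q^2)) ≤ 2*c*p*q := by
  constructor
  · nlinarith [mul_nonneg (sub_nonneg.2 hr) (sq_nonneg (p+q)),
      mul_nonneg (by linarith : (0:ℝ) ≤ B + c) (sq_nonneg (p-q))]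
  · nlinarith [mul_nonneg (sub_nonneg.2 hr) (sq_nonneg (p-q)),
      mul_nonneg (by linarith : (0:ℝ) ≤ B + c) (sq_nonneg (p+q))]

private lemma pennies4_sq1 (B c p : ℝ) (hl : -B ≤ c) (hr : c ≤ B) :
    2*c*p^2 ≤ 2*B*p^2 ∧ -(2*B*p^2) ≤ 2*c*p^2 := by
  constructor
  · nlinarith [mul_nonneg (sub_nonneg.2 hr) (sq_nonneg p)]
  · nlinarith [mul_nonneg (by linarith : (0:ℝ) ≤ B + c) (sq_nonneg p)]

set_option maxHeartbeats 1000000 in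
private lemma pennies4_invariant_aux (σ : ℝ) (hσ : |σ| = 1) (x : ℝ → Fin 4 → ℝ)
    (h0 : ∀ t, HasDerivAt (fun s => x s 0) (σ * (x t 0 * (1 - x t 0) * (2 - 4 * x t 3))) t)
    (h1 : ∀ t, HasDerivAt (fun s => x s 1) (σ * (x t 1 * (1 - x t 1) * (4 * x t 0 - 2))) t)
    (h2 : ∀ t, HasDerivAt (fun s => x s 2) (σ * (x t 2 * (1 - x t 2) * (2 - 4 * x t 1))) t)
    (h3 : ∀ t, HasDerivAt (fun s => x s 3) (σ * (x t 3 * (1 - x t 3) * (4 * x t 2 - 2))) t)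
    (hp0 : x 0 0 + x 0 1 - 1 = 0) (hq0 : x 0 2 - x 0 1 = 0) (hr0 : x 0 3 - x 0 0 = 0)
    {b t : ℝ} (ht : t ∈ Icc (0:ℝ) b) :
    x t 0 + x t 1 - 1 = 0 ∧ x t 2 - x t 1 = 0 ∧ x t 3 - x t 0 = 0 := by
  set P : ℝ → ℝ := fun u => x u 0 + x u 1 - 1 with hP
  set Q : ℝ → ℝ := fun u => x u 2 - x u 1 with hQ
  set R : ℝ → ℝ := fun u => x u 3 - x u 0 with hR
  set Efn : ℝ → ℝ := fun u => P u ^ 2 + Q u ^ 2 + R u ^ 2 with hE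
  have hP' : ∀ u, HasDerivAt P (σ * (x u 0 * (1 - x u 0) * (2 - 4 * x u 3)) +
      σ * (x u 1 * (1 - x u 1) * (4 * x u 0 - 2))) u := fun u => ((h0 u).add (h1 u)).sub_const 1
  have hQ' : ∀ u, HasDerivAt Q (σ * (x u 2 * (1 - x u 2) * (2 - 4 * x u 1)) -
      σ * (x u 1 * (1 - x u 1) * (4 * x u 0 - 2))) u := fun u => (h2 u).sub (h1 u)
  have hR' : ∀ u, HasDerivAt R (σ * (x u 3 * (1 - x u 3) * (4 * x u 2 - 2)) -
      σ * (x u 0 * (1 - x u 0) * (2 - 4 * x u 3))) u := fun u => (h3 u).sub (h0 u)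
  set D : ℝ → ℝ := fun u =>
      2 * P u ^ 1 * (σ * (x u 0 * (1 - x u 0) * (2 - 4 * x u 3)) +
        σ * (x u 1 * (1 - x u 1) * (4 * x u 0 - 2))) +
      2 * Q u ^ 1 * (σ * (x u 2 * (1 - x u 2) * (2 - 4 * x u 1)) -
        σ * (x u 1 * (1 - x u 1) * (4 * x u 0 - 2))) +
      2 * R u ^ 1 * (σ * (x u 3 * (1 - x u 3) * (4 * x u 2 - 2)) -
        σ * (x u 0 * (1 - x u 0) * (2 - 4 * x u 3))) with hD
  have hE' : ∀ u, HasDerivAt Efn (D u) u := by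
    intro u
    exact (((hP' u).pow 2).add ((hQ' u).pow 2)).add ((hR' u).pow 2)
  have hd0 : Differentiable ℝ (fun u => x u 0) := fun u => (h0 u).differentiableAt
  have hd1 : Differentiable ℝ (fun u => x u 1) := fun u => (h1 u).differentiableAt
  have hd2 : Differentiable ℝ (fun u => x u 2) := fun u => (h2 u).differentiableAt
  have hd3 : Differentiable ℝ (fun u => x u 3) := fun u => (h3 u).differentiableAt
  obtain ⟨C, hC⟩ := (isCompact_Icc : IsCompact (Icc (0:ℝ) b)).exists_bound_of_continuousOn
      (f := fun u => |x u 0| + |x u 1| + |x u 2| + |x u 3|)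
      ((((hd0.continuous.abs.add hd1.continuous.abs).add
        hd2.continuous.abs).add hd3.continuous.abs)).continuousOn
  have hCb : ∀ u ∈ Icc (0:ℝ) b,
      |x u 0| ≤ C ∧ |x u 1| ≤ C ∧ |x u 2| ≤ C ∧ |x u 3| ≤ C := by
    intro u hu
    have h := hC u hu
    rw [Real.norm_eq_abs] at h
    have h' : |x u 0| + |x u 1| + |x u 2| + |x u 3| ≤ C := le_trans (le_abs_self _) h
    have n0 := abs_nonneg (x u 0); have n1 := abs_nonneg (x u 1)
    have n2 := abs_nonneg (x u 2); have n3 := abs_nonneg (x u 3)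
    exact ⟨by linarith, by linarith, by linarith, by linarith⟩
  have hC0 : 0 ≤ C := by
    have h := (hCb 0 ⟨le_refl 0, ht.1.trans ht.2⟩).1
    exact le_trans (abs_nonneg _) h
  set B : ℝ := 40 + 80*C + 40*(C*C) with hBdef
  set K : ℝ := 6 * B with hKdef
  have hCC : 0 ≤ C*C := mul_nonneg hC0 hC0
  have hBnn : 0 ≤ B := by rw [hBdef]; linarith
  have bound : ∀ u ∈ Ico (0:ℝ) b, ‖D u‖ ≤ K * ‖Efn u‖ + 0 := by
    intro u hu
    obtain ⟨hb0, hb1, hb2, hb3⟩ := hCb u ⟨hu.1, hu.2.le⟩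
    have habs : ∀ y z : ℝ, |y| ≤ C → |z| ≤ C → -(C*C) ≤ y*z ∧ y*z ≤ C*C := by
      intro y z hy hz
      have hm : |y*z| ≤ C*C := by
        rw [abs_mul]; exact mul_le_mul hy hz (abs_nonneg z) hC0
      exact ⟨by linarith [neg_abs_le (y*z)], by linarith [le_abs_self (y*z)]⟩
    have p00 := habs _ _ hb0 hb0
    have p01 := habs _ _ hb0 hb1
    have p02 := habs _ _ hb0 hb2
    have p03 := habs _ _ hb0 hb3
    have p22 := habs _ _ hb2 hb2
    have p33 := habs _ _ hb3 hb3
    have ha0 := abs_le.mp hb0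
    have ha1 := abs_le.mp hb1
    have ha2 := abs_le.mp hb2
    have ha3 := abs_le.mp hb3
    set c11 : ℝ := 2*(x u 1) - 2*(x u 0) - 4*(x u 0*x u 1) + 4*(x u 0*x u 0) with hc11
    set c13 : ℝ := -4*(x u 0) + 4*(x u 0*x u 0) with hc13
    set c21 : ℝ := 4*(x u 2*x u 2) - 4*(x u 1) - 8*(x u 0*x u 2) + 8*(x u 0*x u 1) with hc21
    set c22 : ℝ := 2 + 2*(x u 2) - 2*(x u 1) - 8*(x u 0) - 4*(x u 0*x u 2) + 4*(x u 0*x u 1)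
        + 8*(x u 0*x u 0) with hc22
    set c31 : ℝ := 4*(x u 3) - 4*(x u 3*x u 3) with hc31
    set c33 : ℝ := 2 - 2*(x u 3) - 2*(x u 0) + 4*(x u 0*x u 3) with hc33
    have hB11 : -B ≤ c11 ∧ c11 ≤ B := ⟨by rw [hc11, hBdef]; linarith, by rw [hc11, hBdef]; linarith⟩
    have hB13 : -B ≤ c13 ∧ c13 ≤ B := ⟨by rw [hc13, hBdef]; linarith, by rw [hc13, hBdef]; linarith⟩
    have hB21 : -B ≤ c21 ∧ c21 ≤ B := ⟨by rw [hc21, hBdef]; linarith, by rw [hc21, hBdef]; linarith⟩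
    have hB22 : -B ≤ c22 ∧ c22 ≤ B := ⟨by rw [hc22, hBdef]; linarith, by rw [hc22, hBdef]; linarith⟩
    have hB31 : -B ≤ c31 ∧ c31 ≤ B := ⟨by rw [hc31, hBdef]; linarith, by rw [hc31, hBdef]; linarith⟩
    have hB33 : -B ≤ c33 ∧ c33 ≤ B := ⟨by rw [hc33, hBdef]; linarith, by rw [hc33, hBdef]; linarith⟩
    have hDid : D u = σ * (2*c11*(P u)^2 + 2*c13*(P u)*(R u) + 2*c21*(P u)*(Q u)
        + 2*c22*(Q u)^2 + 2*c31*(P u)*(R u) + 2*c31*(Q u)*(R u) + 2*c33*(R u)^2) := by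
      simp only [hD, hP, hQ, hR, hc11, hc13, hc21, hc22, hc31, hc33]
      ring
    have hEnn : (0:ℝ) ≤ Efn u := by positivity
    rw [Real.norm_eq_abs, Real.norm_eq_abs, hDid, abs_mul, hσ, one_mul,
      abs_of_nonneg hEnn, add_zero]
    rw [abs_le]
    obtain ⟨k13a, k13b⟩ := pennies4_key B c13 (P u) (R u) hB13.1 hB13.2
    obtain ⟨k21a, k21b⟩ := pennies4_key B c21 (P u) (Q u) hB21.1 hB21.2
    obtain ⟨k31a, k31b⟩ := pennies4_key B c31 (P u) (R u) hB31.1 hB31.2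
    obtain ⟨k32a, k32b⟩ := pennies4_key B c31 (Q u) (R u) hB31.1 hB31.2
    obtain ⟨s11a, s11b⟩ := pennies4_sq1 B c11 (P u) hB11.1 hB11.2
    obtain ⟨s22a, s22b⟩ := pennies4_sq1 B c22 (Q u) hB22.1 hB22.2
    obtain ⟨s33a, s33b⟩ := pennies4_sq1 B c33 (R u) hB33.1 hB33.2
    have hBP := mul_nonneg hBnn (sq_nonneg (P u))
    have hBQ := mul_nonneg hBnn (sq_nonneg (Q u))
    have hBR := mul_nonneg hBnn (sq_nonneg (R u))
    constructor
    · simp only [hE, hKdef]; linarith [k13b, k21b, k31b, k32b, s11b, s22b, s33b, hBP, hBQ, hBR]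
    · simp only [hE, hKdef]; linarith [k13a, k21a, k31a, k32a, s11a, s22a, s33a, hBP, hBQ, hBR]
  have hE0 : ‖Efn 0‖ ≤ 0 := by
    simp only [hE, hP, hQ, hR]
    rw [hp0, hq0, hr0]
    norm_num
  have hgron := norm_le_gronwallBound_of_norm_deriv_right_le
    (f := Efn) (f' := D) (δ := 0) (K := K) (ε := 0) (a := 0) (b := b)
    (fun u _ => (hE' u).continuousAt.continuousWithinAt)
    (fun u _ => (hE' u).hasDerivWithinAt)
    hE0 bound t ht
  rw [gronwallBound_ε0_δ0, Real.norm_eq_abs] at hgron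
  have hEt : Efn t = 0 := abs_eq_zero.mp (le_antisymm hgron (abs_nonneg _))
  have hsq : P t ^ 2 + Q t ^ 2 + R t ^ 2 = 0 := hEt
  have hPt : P t = 0 := by
    have h2 : P t ^ 2 = 0 := by nlinarith [sq_nonneg (P t), sq_nonneg (Q t), sq_nonneg (R t)]
    exact pow_eq_zero_iff two_ne_zero |>.mp h2
  have hQt : Q t = 0 := by
    have h2 : Q t ^ 2 = 0 := by nlinarith [sq_nonneg (P t), sq_nonneg (Q t), sq_nonneg (R t)]
    exact pow_eq_zero_iff two_ne_zero |>.mp h2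
  have hRt : R t = 0 := by
    have h2 : R t ^ 2 = 0 := by nlinarith [sq_nonneg (P t), sq_nonneg (Q t), sq_nonneg (R t)]
    exact pow_eq_zero_iff two_ne_zero |>.mp h2
  exact ⟨hPt, hQt, hRt⟩

/-- The segment `{(1−t, t, t, 1−t) : t ∈ (0,1)}` is invariant under the
4-player matched–mismatched pennies replicator flow, and every solution starting on it
converges to the mixed equilibrium `(1/2, 1/2, 1/2, 1/2)` as `t → ∞`. -/
theorem pennies4_stable_manifold
    (x : ℝ → Fin 4 → ℝ)
    (h0 : ∀ t, HasDerivAt (fun s => x s 0) (x t 0 * (1 - x t 0) * (2 - 4 * x t 3)) t)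
    (h1 : ∀ t, HasDerivAt (fun s => x s 1) (x t 1 * (1 - x t 1) * (4 * x t 0 - 2)) t)
    (h2 : ∀ t, HasDerivAt (fun s => x s 2) (x t 2 * (1 - x t 2) * (2 - 4 * x t 1)) t)
    (h3 : ∀ t, HasDerivAt (fun s => x s 3) (x t 3 * (1 - x t 3) * (4 * x t 2 - 2)) t)
    (hinit : ∃ s ∈ Ioo (0:ℝ) 1,
      x 0 0 = 1 - s ∧ x 0 1 = s ∧ x 0 2 = s ∧ x 0 3 = 1 - s) :
    (∀ t, ∃ s ∈ Ioo (0:ℝ) 1,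
      x t 0 = 1 - s ∧ x t 1 = s ∧ x t 2 = s ∧ x t 3 = 1 - s) ∧
    ∀ i, Tendsto (fun t => x t i) atTop (nhds (1/2)) := by
  obtain ⟨s0, hs0, hx00, hx01, hx02, hx03⟩ := hinit
  have h0' : ∀ t, HasDerivAt (fun s => x s 0) ((1:ℝ) * (x t 0 * (1 - x t 0) * (2 - 4 * x t 3))) t :=
    fun t => by simpa using h0 t
  have h1' : ∀ t, HasDerivAt (fun s => x s 1) ((1:ℝ) * (x t 1 * (1 - x t 1) * (4 * x t 0 - 2))) t :=
    fun t => by simpa using h1 t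
  have h2' : ∀ t, HasDerivAt (fun s => x s 2) ((1:ℝ) * (x t 2 * (1 - x t 2) * (2 - 4 * x t 1))) t :=
    fun t => by simpa using h2 t
  have h3' : ∀ t, HasDerivAt (fun s => x s 3) ((1:ℝ) * (x t 3 * (1 - x t 3) * (4 * x t 2 - 2))) t :=
    fun t => by simpa using h3 t
  have hp0 : x 0 0 + x 0 1 - 1 = 0 := by rw [hx00, hx01]; ring
  have hq0 : x 0 2 - x 0 1 = 0 := by rw [hx02, hx01]; ring
  have hr0 : x 0 3 - x 0 0 = 0 := by rw [hx03, hx00]; ring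
  -- forward invariance
  have hfwd : ∀ t : ℝ, 0 ≤ t →
      x t 0 + x t 1 - 1 = 0 ∧ x t 2 - x t 1 = 0 ∧ x t 3 - x t 0 = 0 := by
    intro t htnn
    exact pennies4_invariant_aux 1 (by norm_num) x h0' h1' h2' h3' hp0 hq0 hr0
      (b := t) ⟨htnn, le_refl t⟩
  -- backward invariance via time reversal
  have hbwd : ∀ t : ℝ, t ≤ 0 →
      x t 0 + x t 1 - 1 = 0 ∧ x t 2 - x t 1 = 0 ∧ x t 3 - x t 0 = 0 := by
    intro t htnp
    set y : ℝ → Fin 4 → ℝ := fun u => x (-u) with hy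
    have hcomp : ∀ (g : ℝ → ℝ) (d : ℝ) (u : ℝ), HasDerivAt g d (-u) →
        HasDerivAt (fun s => g (-s)) (-d) u := by
      intro g d u hg
      have h := hg.comp u (hasDerivAt_neg u)
      simpa [mul_comm, Function.comp_def] using h
    have hy0 : ∀ u, HasDerivAt (fun s => y s 0)
        ((-1:ℝ) * (y u 0 * (1 - y u 0) * (2 - 4 * y u 3))) u := by
      intro u
      have := hcomp (fun s => x s 0) _ u (h0 (-u))
      simpa [hy, neg_mul, one_mul] using this
    have hy1 : ∀ u, HasDerivAt (fun s => y s 1)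
        ((-1:ℝ) * (y u 1 * (1 - y u 1) * (4 * y u 0 - 2))) u := by
      intro u
      have := hcomp (fun s => x s 1) _ u (h1 (-u))
      simpa [hy, neg_mul, one_mul] using this
    have hy2 : ∀ u, HasDerivAt (fun s => y s 2)
        ((-1:ℝ) * (y u 2 * (1 - y u 2) * (2 - 4 * y u 1))) u := by
      intro u
      have := hcomp (fun s => x s 2) _ u (h2 (-u))
      simpa [hy, neg_mul, one_mul] using this
    have hy3 : ∀ u, HasDerivAt (fun s => y s 3)
        ((-1:ℝ) * (y u 3 * (1 - y u 3) * (4 * y u 2 - 2))) u := by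
      intro u
      have := hcomp (fun s => x s 3) _ u (h3 (-u))
      simpa [hy, neg_mul, one_mul] using this
    have hyp0 : y 0 0 + y 0 1 - 1 = 0 := by simpa [hy] using hp0
    have hyq0 : y 0 2 - y 0 1 = 0 := by simpa [hy] using hq0
    have hyr0 : y 0 3 - y 0 0 = 0 := by simpa [hy] using hr0
    have := pennies4_invariant_aux (-1) (by norm_num) y hy0 hy1 hy2 hy3 hyp0 hyq0 hyr0
      (b := -t) ⟨by linarith, le_refl _⟩
    simpa [hy] using this
  have hinv : ∀ t : ℝ, x t 0 = 1 - x t 1 ∧ x t 2 = x t 1 ∧ x t 3 = 1 - x t 1 := by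
    intro t
    rcases le_total 0 t with h | h
    · obtain ⟨hA, hB, hC⟩ := hfwd t h
      exact ⟨by linarith, by linarith, by linarith⟩
    · obtain ⟨hA, hB, hC⟩ := hbwd t h
      exact ⟨by linarith, by linarith, by linarith⟩
  -- the scalar variable
  set s : ℝ → ℝ := fun t => x t 1 with hsdef
  have hs' : ∀ t, HasDerivAt s (s t * (1 - s t) * (2 - 4 * s t)) t := by
    intro t
    have h := h1 t
    have e0 : x t 0 = 1 - x t 1 := (hinv t).1
    convert h using 1
    rw [e0]; simp only [hsdef]; ring
  have hsdiff : Differentiable ℝ s := fun t => (hs' t).differentiableAt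
  have hscont : Continuous s := hsdiff.continuous
  -- W = s (1 - s)
  set W : ℝ → ℝ := fun t => s t * (1 - s t) with hWdef
  have hW' : ∀ t, HasDerivAt W (2 * (1 - 2 * s t)^2 * W t) t := by
    intro t
    have h := (hs' t).mul ((hs' t).const_sub 1)
    refine h.congr_deriv ?_
    simp only [hWdef]; ring
  set c : ℝ → ℝ := fun t => 2 * (1 - 2 * s t)^2 with hcdef
  have hccont : Continuous c := by
    apply Continuous.mul continuous_const
    exact (continuous_const.sub (continuous_const.mul hscont)).pow 2
  set Ci : ℝ → ℝ := fun t => ∫ u in (0:ℝ)..t, c u with hCidef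
  have hCi' : ∀ t, HasDerivAt Ci (c t) t := fun t =>
    (hccont.integral_hasStrictDerivAt 0 t).hasDerivAt
  have hG' : ∀ t, HasDerivAt (fun t => W t * Real.exp (-(Ci t))) 0 t := by
    intro t
    have hexp : HasDerivAt (fun t => Real.exp (-(Ci t))) (Real.exp (-(Ci t)) * (-(c t))) t :=
      ((hCi' t).neg).exp
    have h := (hW' t).mul hexp
    refine h.congr_deriv ?_
    simp only [hWdef, hcdef]; ring
  have hGconst : ∀ t, W t * Real.exp (-(Ci t)) = W 0 * Real.exp (-(Ci 0)) := by
    intro t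
    exact is_const_of_deriv_eq_zero
      (fun u => (hG' u).differentiableAt) (fun u => (hG' u).deriv) t 0
  have hCi0 : Ci 0 = 0 := intervalIntegral.integral_same
  have hW0 : W 0 = s0 * (1 - s0) := by simp only [hWdef, hsdef]; rw [hx01]
  have hW0pos : 0 < W 0 := by rw [hW0]; nlinarith [hs0.1, hs0.2]
  have hWeq : ∀ t, W t = W 0 * Real.exp (Ci t) := by
    intro t
    have h := hGconst t
    rw [hCi0, neg_zero, Real.exp_zero, mul_one] at h
    have : W t = (W t * Real.exp (-(Ci t))) * Real.exp (Ci t) := by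
      rw [mul_assoc, ← Real.exp_add]; simp
    rw [this, h]
  have hWpos : ∀ t, 0 < W t := fun t => by
    rw [hWeq t]; exact mul_pos hW0pos (Real.exp_pos _)
  have hs01 : ∀ t, 0 < s t ∧ s t < 1 := by
    intro t
    have h := hWpos t
    simp only [hWdef] at h
    constructor
    · nlinarith
    · nlinarith
  -- Part 1
  have part1 : ∀ t, ∃ sv ∈ Ioo (0:ℝ) 1,
      x t 0 = 1 - sv ∧ x t 1 = sv ∧ x t 2 = sv ∧ x t 3 = 1 - sv := by
    intro t
    exact ⟨x t 1, ⟨(hs01 t).1, (hs01 t).2⟩, (hinv t).1, rfl, (hinv t).2.1, (hinv t).2.2⟩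
  refine ⟨part1, ?_⟩
  -- convergence
  have hCinn : ∀ t : ℝ, 0 ≤ t → 0 ≤ Ci t := by
    intro t ht
    apply intervalIntegral.integral_nonneg ht
    intro u _
    simp only [hcdef]
    positivity
  have hWge : ∀ t : ℝ, 0 ≤ t → W 0 ≤ W t := by
    intro t ht
    rw [hWeq t]
    nlinarith [Real.one_le_exp (hCinn t ht), hW0pos]
  set V : ℝ → ℝ := fun t => (s t - 1/2)^2 with hVdef
  have hV' : ∀ t, HasDerivAt V (-8 * W t * V t) t := by
    intro t
    have h := ((hs' t).sub_const (1/2)).pow 2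
    refine h.congr_deriv ?_
    simp only [hVdef, hWdef]
    push_cast
    ring
  set H : ℝ → ℝ := fun t => V t * Real.exp (8 * W 0 * t) with hHdef
  have hH' : ∀ t, HasDerivAt H
      ((-8 * W t * V t) * Real.exp (8 * W 0 * t) + V t * (Real.exp (8 * W 0 * t) * (8 * W 0))) t := by
    intro t
    have hlin : HasDerivAt (fun t : ℝ => 8 * W 0 * t) (8 * W 0) t := by
      simpa using (hasDerivAt_id t).const_mul (8 * W 0)
    exact (hV' t).mul hlin.exp
  have hHdiff : Differentiable ℝ H := fun t => (hH' t).differentiableAt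
  have hHanti : AntitoneOn H (Ici (0:ℝ)) := by
    apply antitoneOn_of_deriv_nonpos (convex_Ici 0) hHdiff.continuous.continuousOn
      hHdiff.differentiableOn
    intro u hu
    rw [interior_Ici] at hu
    have hWu := hWge u (le_of_lt hu)
    have hVnn : 0 ≤ V u := by simp only [hVdef]; positivity
    rw [(hH' u).deriv]
    have hfac : (-8 * W u * V u) * Real.exp (8 * W 0 * u) + V u * (Real.exp (8 * W 0 * u) * (8 * W 0))
        = -8 * ((W u - W 0) * V u * Real.exp (8 * W 0 * u)) := by ring
    rw [hfac]
    have : 0 ≤ (W u - W 0) * V u * Real.exp (8 * W 0 * u) :=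
      mul_nonneg (mul_nonneg (by linarith) hVnn) (Real.exp_pos _).le
    linarith
  have hVle : ∀ t : ℝ, 0 ≤ t → V t ≤ V 0 * Real.exp (-(8 * W 0 * t)) := by
    intro t ht
    have h := hHanti (self_mem_Ici) (mem_Ici.mpr ht) ht
    simp only [hHdef] at h
    rw [mul_zero, Real.exp_zero, mul_one] at h
    have hepos := Real.exp_pos (8 * W 0 * t)
    rw [Real.exp_neg]
    calc V t = (V t * Real.exp (8 * W 0 * t)) * (Real.exp (8 * W 0 * t))⁻¹ := by
            field_simp
      _ ≤ V 0 * (Real.exp (8 * W 0 * t))⁻¹ :=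
            mul_le_mul_of_nonneg_right h (by positivity)
  have hVtendsto : Tendsto V atTop (nhds 0) := by
    have hup : Tendsto (fun t => V 0 * Real.exp (-(8 * W 0 * t))) atTop (nhds 0) := by
      have h1 : Tendsto (fun t : ℝ => 8 * W 0 * t) atTop atTop := by
        apply Tendsto.const_mul_atTop (by linarith : (0:ℝ) < 8 * W 0) tendsto_id
      have h2 : Tendsto (fun t : ℝ => Real.exp (-(8 * W 0 * t))) atTop (nhds 0) :=
        Real.tendsto_exp_neg_atTop_nhds_zero.comp h1
      have := h2.const_mul (V 0)
      simpa using this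
    apply tendsto_of_tendsto_of_tendsto_of_le_of_le' tendsto_const_nhds hup
    · filter_upwards with t
      simp only [hVdef]; positivity
    · filter_upwards [eventually_ge_atTop (0:ℝ)] with t ht
      exact hVle t ht
  have hstendsto : Tendsto s atTop (nhds (1/2)) := by
    rw [tendsto_iff_dist_tendsto_zero]
    have heq : (fun t => dist (s t) (1/2)) = fun t => Real.sqrt (V t) := by
      funext t
      rw [Real.dist_eq, ← Real.sqrt_sq_eq_abs]
    rw [heq]
    have := (Real.continuous_sqrt.tendsto 0).comp hVtendsto
    simpa [Real.sqrt_zero, Function.comp_def] using this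
  have h1m : Tendsto (fun t => 1 - s t) atTop (nhds (1/2)) := by
    have h := (tendsto_const_nhds (x := (1:ℝ)) (f := atTop)).sub hstendsto
    norm_num at h
    exact h
  intro i
  fin_cases i
  · exact h1m.congr (fun t => ((hinv t).1).symm)
  · exact hstendsto
  · exact hstendsto.congr (fun t => ((hinv t).2.1).symm)
  · exact h1m.congr (fun t => ((hinv t).2.2).symm)
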